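/- Let S ⊂ [m]×[n], U ∈ ℝ^{m×n}, and let X be a Lagrange critical point of d_U on 𝓛_r^S: M_{I,J}(X) = 0 for all |I|=|J|=r+1, x_{ij} = 0 for (i,j) ∈ S, and u_{ij} − x_{ij} = Σ_{I,J} λ_{I,J} ∂M_{I,J}/∂x_{ij}(X) + Σ_{(k,l)∈S} μ_{kl} δ_{(i,j),(k,l)} for some multipliers λ, μ. Let A ⊂ [m], B ⊂ [n] with |A| = |B| ≥ m−r+1 and S ∩ (A×B) = ∅. Then the minor M_{A,B}(U − X) = 0. -/

import Mathlib

open Matrix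
open scoped Classical

/-- The minor with rows `I` and columns `J` of an `m × n` complex matrix; it is `0` by
convention when `|I| ≠ |J|`. -/
noncomputable def minorC {m n : ℕ} (Y : Matrix (Fin m) (Fin n) ℂ)
    (I : Finset (Fin m)) (J : Finset (Fin n)) : ℂ :=
  if h : I.card = J.card then
    (Y.submatrix (⇑(I.orderEmbOfFin rfl)) (⇑(J.orderEmbOfFin h.symm))).det
  else 0

/-- The minor `M_{I,J}` as a function of the `m·n` matrix entries. -/
noncomputable def minorFun {m n : ℕ} (I : Finset (Fin m)) (J : Finset (Fin n)) :
    (Fin m × Fin n → ℂ) → ℂ :=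
  fun Y => minorC (Matrix.of fun a b => Y (a, b)) I J

lemma minorC_eq {m n : ℕ} {I : Finset (Fin m)} {J : Finset (Fin n)} (h : I.card = J.card)
    (Y : Matrix (Fin m) (Fin n) ℂ) :
    minorC Y I J = (Y.submatrix (⇑(I.orderEmbOfFin rfl)) (⇑(J.orderEmbOfFin h.symm))).det := by
  unfold minorC; rw [dif_pos h]

lemma minorFun_apply {m n : ℕ} {I : Finset (Fin m)} {J : Finset (Fin n)} (h : I.card = J.card)
    (Y : Fin m × Fin n → ℂ) :
    minorFun I J Y =
      ((Matrix.of fun a b => Y (a, b)).submatrix (⇑(I.orderEmbOfFin rfl))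
        (⇑(J.orderEmbOfFin h.symm))).det := by
  unfold minorFun; rw [minorC_eq h]

lemma differentiable_prod_apply {m n : ℕ} {ι : Type*} (s : Finset ι)
    (p : ι → Fin m × Fin n) :
    Differentiable ℂ (fun Y : Fin m × Fin n → ℂ => ∏ a ∈ s, Y (p a)) := by
  induction s using Finset.induction_on with
  | empty => simpa using differentiable_const (1 : ℂ)
  | insert _ _ hx ih =>
      simp only [Finset.prod_insert hx]
      exact (differentiable_apply _).mul ih

lemma differentiable_minorFun {m n : ℕ} (I : Finset (Fin m)) (J : Finset (Fin n)) :
    Differentiable ℂ (minorFun I J) := by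
  by_cases h : I.card = J.card
  · have hfun : minorFun I J = fun Y : Fin m × Fin n → ℂ =>
        ∑ σ : Equiv.Perm (Fin I.card), (Equiv.Perm.sign σ : ℂ) *
          ∏ a, Y (I.orderEmbOfFin rfl (σ a), J.orderEmbOfFin h.symm a) := by
      funext Y
      rw [minorFun_apply h, Matrix.det_apply']
      rfl
    rw [hfun]
    apply Differentiable.fun_sum
    intro σ _
    apply Differentiable.const_mul
    exact differentiable_prod_apply Finset.univ
      (fun a => (I.orderEmbOfFin rfl (σ a), J.orderEmbOfFin h.symm a))
  · have hfun : minorFun I J = fun _ => (0 : ℂ) := by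
      funext Y; unfold minorFun minorC; rw [dif_neg h]
    rw [hfun]; exact differentiable_const 0

lemma fderiv_apply_eq_zero {m n : ℕ} {f : (Fin m × Fin n → ℂ) → ℂ} (hf : Differentiable ℂ f)
    (x C : Fin m × Fin n → ℂ) (h : ∀ t : ℂ, f (x + t • C) = 0) :
    fderiv ℂ f x C = 0 := by
  have hline : HasDerivAt (fun t : ℂ => x + t • C) C 0 := by
    simpa using ((hasDerivAt_id (0 : ℂ)).smul_const C).const_add x
  have h1 : HasDerivAt (fun t : ℂ => f (x + t • C)) (fderiv ℂ f x C) 0 := by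
    have h2 := (hf (x + (0 : ℂ) • C)).hasFDerivAt.comp_hasDerivAt 0 hline
    rw [zero_smul, add_zero] at h2; exact h2
  have h2 : (fun t : ℂ => f (x + t • C)) = fun _ => (0 : ℂ) := funext h
  rw [h2] at h1
  exact h1.unique (hasDerivAt_const _ _)

lemma card_le_finrank_of_mem {m : ℕ} {ι : Type*} [Fintype ι] {P : Submodule ℂ (Fin m → ℂ)}
    {u : ι → Fin m → ℂ} (hu : ∀ i, u i ∈ P) (hind : LinearIndependent ℂ u) :
    Fintype.card ι ≤ Module.finrank ℂ P := by
  rw [← finrank_span_eq_card hind]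
  exact Submodule.finrank_mono (Submodule.span_le.2 (Set.range_subset_iff.2 hu))
lemma det_updateCol_colX {m n r : ℕ} {X : Matrix (Fin m) (Fin n) ℂ}
    (hminors : ∀ (I : Finset (Fin m)) (J : Finset (Fin n)),
      I.card = r + 1 → J.card = r + 1 → minorC X I J = 0)
    {I : Finset (Fin m)} {J : Finset (Fin n)} (hI : I.card = r + 1) (hJ : J.card = r + 1)
    (h : I.card = J.card) (b₀ : Fin I.card) (j' : Fin n) :
    ((X.submatrix (⇑(I.orderEmbOfFin rfl)) (⇑(J.orderEmbOfFin h.symm))).updateCol b₀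
      (fun a => X (I.orderEmbOfFin rfl a) j')).det = 0 := by
  set e : Fin I.card → Fin m := ⇑(I.orderEmbOfFin rfl) with he
  set f : Fin I.card → Fin n := ⇑(J.orderEmbOfFin h.symm) with hf
  have hfinj : Function.Injective f := (J.orderEmbOfFin h.symm).injective
  have hfmem : ∀ b, f b ∈ J := fun b => Finset.orderEmbOfFin_mem J h.symm b
  by_cases hj' : j' ∈ J
  · obtain ⟨b₁, hb₁⟩ : ∃ b₁, f b₁ = j' := by
      have : j' ∈ Set.range f := by
        rw [hf, Finset.range_orderEmbOfFin]; exact hj'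
      exact this
    by_cases hb : b₁ = b₀
    · have hcol : (fun a => X (e a) j') =
          fun a => (X.submatrix e f) a b₀ := by
        funext a; rw [← hb₁, hb]; rfl
      rw [hcol, Matrix.updateCol_eq_self]
      have h0 := hminors I J hI hJ
      rwa [minorC_eq h] at h0
    · apply Matrix.det_zero_of_column_eq (Ne.symm hb)
      intro a
      rw [Matrix.updateCol_apply, Matrix.updateCol_apply, if_pos rfl, if_neg hb]
      rw [Matrix.submatrix_apply, hb₁]
  · -- j' ∉ J
    have hfb₀J : f b₀ ∈ J := hfmem b₀
    have hj'' : j' ∉ J.erase (f b₀) := fun hmem => hj' (Finset.mem_of_mem_erase hmem)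
    set J' : Finset (Fin n) := insert j' (J.erase (f b₀)) with hJ'
    have hJ'card : J'.card = r + 1 := by
      rw [hJ', Finset.card_insert_of_notMem hj'', Finset.card_erase_of_mem hfb₀J, hJ]; omega
    have hJ'I : J'.card = I.card := by rw [hJ'card, hI]
    set f' : Fin I.card → Fin n := ⇑(J'.orderEmbOfFin hJ'I) with hf'
    set c : Fin I.card → Fin n := fun b => if b = b₀ then j' else f b with hc
    have hcmem : ∀ b, c b ∈ J' := by
      intro b
      by_cases hb : b = b₀
      · rw [hc]; simp only [if_pos hb]; exact Finset.mem_insert_self _ _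
      · rw [hc]; simp only [if_neg hb]
        exact Finset.mem_insert_of_mem
          (Finset.mem_erase.2 ⟨fun hh => hb (hfinj hh), hfmem b⟩)
    have hcinj : Function.Injective c := by
      intro b b' hbb
      rw [hc] at hbb
      by_cases h1 : b = b₀ <;> by_cases h2 : b' = b₀
      · rw [h1, h2]
      · exfalso; simp only [if_pos h1, if_neg h2] at hbb
        exact hj' (hbb ▸ hfmem b')
      · exfalso; simp only [if_neg h1, if_pos h2] at hbb
        exact hj' (hbb ▸ hfmem b)
      · simp only [if_neg h1, if_neg h2] at hbb
        exact hfinj hbb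
    -- bijection
    set g : Fin I.card → Fin I.card :=
      fun b => (J'.orderIsoOfFin hJ'I).symm ⟨c b, hcmem b⟩ with hg
    have hginj : Function.Injective g := by
      intro b b' hbb
      rw [hg] at hbb
      have := (J'.orderIsoOfFin hJ'I).symm.injective hbb
      exact hcinj (Subtype.ext_iff.1 this)
    have hgbij : Function.Bijective g := (Finite.injective_iff_bijective).1 hginj
    set σ : Equiv.Perm (Fin I.card) := Equiv.ofBijective g hgbij with hσ
    have hfσ : ∀ b, f' (σ b) = c b := by
      intro b
      have : (J'.orderIsoOfFin hJ'I) (g b) = ⟨c b, hcmem b⟩ := by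
        rw [hg]; exact (J'.orderIsoOfFin hJ'I).apply_symm_apply _
      have h2 : f' (g b) = ((J'.orderIsoOfFin hJ'I) (g b) : Fin n) := rfl
      rw [hσ]; rw [Equiv.ofBijective_apply] at *
      rw [h2, this]
    have hmatrix : (X.submatrix e f).updateCol b₀ (fun a => X (e a) j') =
        (X.submatrix e f').submatrix id σ := by
      funext a b
      rw [Matrix.submatrix_apply, Matrix.submatrix_apply, hfσ b, id_eq]
      by_cases hb : b = b₀
      · rw [Matrix.updateCol_apply, if_pos hb, hc]
        simp only [if_pos hb]
      · rw [Matrix.updateCol_apply, if_neg hb, hc]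
        simp only [if_neg hb]; rfl
    rw [hmatrix, Matrix.det_permute' σ]
    have hdet0 : (X.submatrix e f').det = 0 := by
      have h0 := hminors I J' hI hJ'card
      rw [minorC_eq hJ'I.symm] at h0
      exact h0
    rw [hdet0, mul_zero]
lemma exists_rel {m n r : ℕ} {X : Matrix (Fin m) (Fin n) ℂ} (hr : X.rank < r)
    {k : ℕ} (hk : k = r + 1) (f : Fin k → Fin n) (b₀ : Fin k) :
    ∃ v : Fin k → ℂ, v ≠ 0 ∧ v b₀ = 0 ∧ ∀ a : Fin m, ∑ b, v b * X a (f b) = 0 := by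
  classical
  set u : {b : Fin k // b ≠ b₀} → (Fin m → ℂ) := fun b => fun a => X a (f b.1) with hu
  have hnli : ¬ LinearIndependent ℂ u := by
    intro hli
    have hmem : ∀ b, u b ∈ LinearMap.range X.mulVecLin := by
      intro b
      refine ⟨Pi.single (f b.1) 1, ?_⟩
      funext a
      simp [hu, Matrix.mulVecLin_apply, Matrix.mulVec_single]
    have hcards := card_le_finrank_of_mem hmem hli
    have hcard2 : Fintype.card {b : Fin k // b ≠ b₀} = k - 1 := by
      rw [Fintype.card_subtype_compl, Fintype.card_subtype_eq, Fintype.card_fin]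
    rw [hcard2] at hcards
    have : X.rank = Module.finrank ℂ (LinearMap.range X.mulVecLin) := rfl
    omega
  rw [Fintype.not_linearIndependent_iff] at hnli
  obtain ⟨g, hg, b₁, hb₁⟩ := hnli
  refine ⟨fun b => if hb : b = b₀ then 0 else g ⟨b, hb⟩, ?_, by simp, ?_⟩
  · intro h0
    apply hb₁
    have h1 := congrFun h0 b₁.1
    simpa [b₁.2] using h1
  · intro a
    have h1 := congrFun hg a
    rw [Finset.sum_apply] at h1
    simp only [Pi.smul_apply, smul_eq_mul, hu, Pi.zero_apply] at h1
    rw [← Finset.sum_erase_add _ _ (Finset.mem_univ b₀)]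
    have hz : (if hb : b₀ = b₀ then (0 : ℂ) else g ⟨b₀, hb⟩) = 0 := dif_pos rfl
    beta_reduce
    rw [hz, zero_mul, add_zero]
    rw [Finset.sum_subtype (p := fun b => b ≠ b₀) _ (fun x => by simp [Finset.mem_erase])]
    rw [← h1]
    apply Finset.sum_congr rfl
    intro b _
    rw [dif_neg b.2]

lemma det_updateCol_lowrank {m n r : ℕ} {X : Matrix (Fin m) (Fin n) ℂ} (hr : X.rank < r)
    {k : ℕ} (hk : k = r + 1) (e : Fin k → Fin m) (f : Fin k → Fin n)
    (b₀ : Fin k) (w : Fin k → ℂ) :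
    ((X.submatrix e f).updateCol b₀ w).det = 0 := by
  classical
  obtain ⟨v, hv0, hvb₀, hrel⟩ := exists_rel hr hk f b₀
  rw [← Matrix.exists_mulVec_eq_zero_iff]
  refine ⟨v, hv0, ?_⟩
  funext a
  simp only [Matrix.mulVec, dotProduct, Pi.zero_apply]
  have : ∀ b, ((X.submatrix e f).updateCol b₀ w) a b * v b = X (e a) (f b) * v b := by
    intro b
    by_cases hb : b = b₀
    · rw [hb, hvb₀, mul_zero, mul_zero]
    · rw [Matrix.updateCol_apply, if_neg hb, Matrix.submatrix_apply]
  rw [Finset.sum_congr rfl (fun b _ => this b)]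
  have := hrel (e a)
  rw [← this]
  apply Finset.sum_congr rfl
  intro b _; ring

lemma fderiv_minorFun_dir_col {m n r : ℕ} {X : Matrix (Fin m) (Fin n) ℂ}
    (hminors : ∀ (I : Finset (Fin m)) (J : Finset (Fin n)),
      I.card = r + 1 → J.card = r + 1 → minorC X I J = 0)
    {I : Finset (Fin m)} {J : Finset (Fin n)} (hI : I.card = r + 1) (hJ : J.card = r + 1)
    (h : I.card = J.card) (j j' : Fin n) :
    fderiv ℂ (minorFun I J) (fun p => X p.1 p.2)
      (fun p : Fin m × Fin n => if p.2 = j then X p.1 j' else 0) = 0 := by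
  apply fderiv_apply_eq_zero (differentiable_minorFun I J)
  intro t
  rw [minorFun_apply h]
  set e : Fin I.card → Fin m := ⇑(I.orderEmbOfFin rfl) with he
  set f : Fin I.card → Fin n := ⇑(J.orderEmbOfFin h.symm) with hf
  have hfinj : Function.Injective f := (J.orderEmbOfFin h.symm).injective
  have hbase := hminors I J hI hJ
  rw [minorC_eq h] at hbase
  have key : ∀ (Y : Fin m × Fin n → ℂ),
      (∀ a b, Y (e a, f b) = X (e a) (f b) + t * (if f b = j then X (e a) j' else 0)) →
      ((Matrix.of fun a b => Y (a, b)).submatrix e f).det = 0 := by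
    intro Y hY
    by_cases hj : j ∈ J
    · obtain ⟨b₀, hb₀⟩ : ∃ b₀, f b₀ = j := by
        have h5 : j ∈ Set.range f := by rw [hf, Finset.range_orderEmbOfFin]; exact hj
        exact h5
      have hM : (Matrix.of fun a b => Y (a, b)).submatrix e f =
          (X.submatrix e f).updateCol b₀
            ((fun a => X (e a) (f b₀)) + t • fun a => X (e a) j') := by
        funext a b
        rw [Matrix.submatrix_apply, Matrix.of_apply, hY a b, Matrix.updateCol_apply]
        by_cases hb : b = b₀
        · rw [if_pos hb, hb, if_pos hb₀]
          simp only [Pi.add_apply, Pi.smul_apply, smul_eq_mul]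
        · rw [if_neg hb]
          have hfb : f b ≠ j := fun hh => hb (hfinj (hb₀ ▸ hh))
          rw [if_neg hfb, mul_zero, add_zero, Matrix.submatrix_apply]
      rw [hM, Matrix.det_updateCol_add, Matrix.det_updateCol_smul]
      have h1 : (X.submatrix e f).updateCol b₀ (fun a => X (e a) (f b₀)) =
          X.submatrix e f := by
        have h2 : (fun a => X (e a) (f b₀)) = fun a => (X.submatrix e f) a b₀ := rfl
        rw [h2, Matrix.updateCol_eq_self]
      rw [h1, hbase, det_updateCol_colX hminors hI hJ h b₀ j', mul_zero, add_zero]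
    · have hM : (Matrix.of fun a b => Y (a, b)).submatrix e f = X.submatrix e f := by
        funext a b
        rw [Matrix.submatrix_apply, Matrix.of_apply, hY a b, Matrix.submatrix_apply]
        have hfb : f b ≠ j := fun hh => hj (hh ▸ Finset.orderEmbOfFin_mem J h.symm b)
        rw [if_neg hfb, mul_zero, add_zero]
      rw [hM, hbase]
  exact key _ (fun a b => rfl)

lemma fderiv_minorFun_single {m n r : ℕ} {X : Matrix (Fin m) (Fin n) ℂ}
    (hminors : ∀ (I : Finset (Fin m)) (J : Finset (Fin n)),
      I.card = r + 1 → J.card = r + 1 → minorC X I J = 0)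
    (hr : X.rank < r)
    {I : Finset (Fin m)} {J : Finset (Fin n)} (hI : I.card = r + 1) (hJ : J.card = r + 1)
    (h : I.card = J.card) (i : Fin m) (j : Fin n) :
    fderiv ℂ (minorFun I J) (fun p => X p.1 p.2) (Pi.single (i, j) 1) = 0 := by
  apply fderiv_apply_eq_zero (differentiable_minorFun I J)
  intro t
  rw [minorFun_apply h]
  set e : Fin I.card → Fin m := ⇑(I.orderEmbOfFin rfl) with he
  set f : Fin I.card → Fin n := ⇑(J.orderEmbOfFin h.symm) with hf
  have heinj : Function.Injective e := (I.orderEmbOfFin rfl).injective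
  have hfinj : Function.Injective f := (J.orderEmbOfFin h.symm).injective
  have hbase := hminors I J hI hJ
  rw [minorC_eq h] at hbase
  have key : ∀ (Y : Fin m × Fin n → ℂ),
      (∀ a b, Y (e a, f b) =
        X (e a) (f b) + t * (if (e a, f b) = (i, j) then 1 else 0)) →
      ((Matrix.of fun a b => Y (a, b)).submatrix e f).det = 0 := by
    intro Y hY
    by_cases hij : i ∈ I ∧ j ∈ J
    · obtain ⟨a₀, ha₀⟩ : ∃ a₀, e a₀ = i := by
        have h5 : i ∈ Set.range e := by rw [he, Finset.range_orderEmbOfFin]; exact hij.1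
        exact h5
      obtain ⟨b₀, hb₀⟩ : ∃ b₀, f b₀ = j := by
        have h5 : j ∈ Set.range f := by rw [hf, Finset.range_orderEmbOfFin]; exact hij.2
        exact h5
      have hM : (Matrix.of fun a b => Y (a, b)).submatrix e f =
          (X.submatrix e f).updateCol b₀
            ((fun a => X (e a) (f b₀)) + t • fun a => if a = a₀ then (1 : ℂ) else 0) := by
        funext a b
        rw [Matrix.submatrix_apply, Matrix.of_apply, hY a b, Matrix.updateCol_apply]
        by_cases hb : b = b₀
        · rw [if_pos hb, hb]
          simp only [Pi.add_apply, Pi.smul_apply, smul_eq_mul]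
          congr 2
          by_cases ha : a = a₀
          · rw [if_pos ha, if_pos (by rw [ha, ha₀, hb₀])]
          · rw [if_neg ha, if_neg (fun hh => ha (heinj (by
                simp only [Prod.mk.injEq] at hh
                rw [hh.1, ha₀])))]
        · rw [if_neg hb]
          have hne : (e a, f b) ≠ (i, j) := fun hh => hb (hfinj (by
            simp only [Prod.mk.injEq] at hh
            rw [hh.2, hb₀]))
          rw [if_neg hne, mul_zero, add_zero, Matrix.submatrix_apply]
      rw [hM, Matrix.det_updateCol_add, Matrix.det_updateCol_smul]
      have h1 : (X.submatrix e f).updateCol b₀ (fun a => X (e a) (f b₀)) =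
          X.submatrix e f := by
        have h2 : (fun a => X (e a) (f b₀)) = fun a => (X.submatrix e f) a b₀ := rfl
        rw [h2, Matrix.updateCol_eq_self]
      rw [h1, hbase, det_updateCol_lowrank hr hI e f b₀ _, mul_zero, add_zero]
    · have hM : (Matrix.of fun a b => Y (a, b)).submatrix e f = X.submatrix e f := by
        funext a b
        rw [Matrix.submatrix_apply, Matrix.of_apply, hY a b, Matrix.submatrix_apply]
        have hne : (e a, f b) ≠ (i, j) := by
          intro hh
          simp only [Prod.mk.injEq] at hh
          exact hij ⟨hh.1 ▸ Finset.orderEmbOfFin_mem I rfl a,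
            hh.2 ▸ Finset.orderEmbOfFin_mem J h.symm b⟩
        rw [if_neg hne, mul_zero, add_zero]
      rw [hM, hbase]
  refine key _ (fun a b => ?_)
  simp [Pi.single_apply]

/-- If `X` is a Lagrange critical point of `d_U` on `𝓛_r^S` and `A × B` is a block of size
`|A| = |B| ≥ m − r + 1` disjoint from the zero pattern `S`, then `M_{A,B}(U − X) = 0`. -/
theorem stmt_15 {m n : ℕ} (hmn : m ≤ n) (r : ℕ)
    (S : Finset (Fin m × Fin n))
    (U : Matrix (Fin m) (Fin n) ℝ) (X : Matrix (Fin m) (Fin n) ℂ)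
    (lam : Finset (Fin m) × Finset (Fin n) → ℂ) (mu : Fin m × Fin n → ℂ)
    (hminors : ∀ (I : Finset (Fin m)) (J : Finset (Fin n)),
      I.card = r + 1 → J.card = r + 1 → minorC X I J = 0)
    (hzero : ∀ p ∈ S, X p.1 p.2 = 0)
    (hlag : ∀ i j, (U i j : ℂ) - X i j =
      (∑ IJ ∈ Finset.univ.filter
          (fun IJ : Finset (Fin m) × Finset (Fin n) =>
            IJ.1.card = r + 1 ∧ IJ.2.card = r + 1),
        lam IJ *
          fderiv ℂ (minorFun IJ.1 IJ.2) (fun p => X p.1 p.2) (Pi.single (i, j) 1)) +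
      ∑ p ∈ S, mu p * (if (i, j) = p then 1 else 0))
    (A : Finset (Fin m)) (B : Finset (Fin n)) (hAB : A.card = B.card)
    (hcard : m - r + 1 ≤ A.card)
    (hdisj : ∀ p ∈ S, ¬(p.1 ∈ A ∧ p.2 ∈ B)) :
    minorC (U.map (Complex.ofReal) - X) A B = 0 := by
  classical
  set x₀ : Fin m × Fin n → ℂ := fun p => X p.1 p.2 with hx₀
  set F : Finset (Finset (Fin m) × Finset (Fin n)) := Finset.univ.filter
      (fun IJ : Finset (Fin m) × Finset (Fin n) =>
        IJ.1.card = r + 1 ∧ IJ.2.card = r + 1) with hF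
  set N : Matrix (Fin m) (Fin n) ℂ := Matrix.of fun i j =>
      ∑ IJ ∈ F, lam IJ * fderiv ℂ (minorFun IJ.1 IJ.2) x₀ (Pi.single (i, j) 1) with hN
  have key : ∀ IJ : Finset (Fin m) × Finset (Fin n), IJ.1.card = r + 1 → IJ.2.card = r + 1 →
      ∀ (j j' : Fin n),
        ∑ i, X i j' * fderiv ℂ (minorFun IJ.1 IJ.2) x₀ (Pi.single (i, j) 1) = 0 := by
    intro IJ h1 h2 j j'
    have hcc : IJ.1.card = IJ.2.card := by rw [h1, h2]
    have hlin : ∑ i, X i j' * fderiv ℂ (minorFun IJ.1 IJ.2) x₀ (Pi.single (i, j) 1)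
        = fderiv ℂ (minorFun IJ.1 IJ.2) x₀ (∑ i, X i j' • (Pi.single (i, j) 1 : Fin m × Fin n → ℂ)) := by
      rw [map_sum]
      apply Finset.sum_congr rfl
      intro i _
      rw [(fderiv ℂ (minorFun IJ.1 IJ.2) x₀).map_smul, smul_eq_mul]
    have hC : (∑ i, X i j' • (Pi.single (i, j) 1 : Fin m × Fin n → ℂ)) =
        fun p : Fin m × Fin n => if p.2 = j then X p.1 j' else 0 := by
      funext p
      rw [Finset.sum_apply]
      obtain ⟨p1, p2⟩ := p
      by_cases hp : p2 = j
      · subst hp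
        simp [Pi.single_apply, Prod.mk.injEq]
      · simp [Pi.single_apply, Prod.mk.injEq, hp]
    rw [hlin, hC]
    exact fderiv_minorFun_dir_col hminors h1 h2 hcc j j'
  have hkerN : ∀ (j j' : Fin n), ∑ i, X i j' * N i j = 0 := by
    intro j j'
    have h1 : ∑ i, X i j' * N i j = ∑ IJ ∈ F, lam IJ *
        ∑ i, X i j' * fderiv ℂ (minorFun IJ.1 IJ.2) x₀ (Pi.single (i, j) 1) := by
      calc ∑ i, X i j' * N i j
          = ∑ i, ∑ IJ ∈ F, lam IJ *
              (X i j' * fderiv ℂ (minorFun IJ.1 IJ.2) x₀ (Pi.single (i, j) 1)) := by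
            apply Finset.sum_congr rfl; intro i _
            rw [hN, Matrix.of_apply, Finset.mul_sum]
            apply Finset.sum_congr rfl; intro IJ _; ring
        _ = ∑ IJ ∈ F, ∑ i, lam IJ *
              (X i j' * fderiv ℂ (minorFun IJ.1 IJ.2) x₀ (Pi.single (i, j) 1)) :=
            Finset.sum_comm
        _ = ∑ IJ ∈ F, lam IJ *
              ∑ i, X i j' * fderiv ℂ (minorFun IJ.1 IJ.2) x₀ (Pi.single (i, j) 1) := by
            apply Finset.sum_congr rfl; intro IJ _; rw [Finset.mul_sum]
    rw [h1]
    apply Finset.sum_eq_zero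
    intro IJ hIJ
    rw [hF, Finset.mem_filter] at hIJ
    rw [key IJ hIJ.2.1 hIJ.2.2 j j', mul_zero]
  have hEnt : ∀ a ∈ A, ∀ b ∈ B, (U.map (Complex.ofReal) - X) a b = N a b := by
    intro a ha b hb
    have hmu : ∑ p ∈ S, mu p * (if (a, b) = p then 1 else 0) = 0 := by
      apply Finset.sum_eq_zero
      intro p hp
      have hne : (a, b) ≠ p := by rintro rfl; exact hdisj _ hp ⟨ha, hb⟩
      rw [if_neg hne, mul_zero]
    have h2 := hlag a b
    rw [hmu, add_zero] at h2
    have h3 : (U.map (Complex.ofReal) - X) a b = (U a b : ℂ) - X a b := by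
      simp [Matrix.sub_apply, Matrix.map_apply]
    rw [h3, h2, hN]
    rfl
  rw [minorC_eq hAB]
  set eA : Fin A.card → Fin m := ⇑(A.orderEmbOfFin rfl) with heA
  set eB : Fin A.card → Fin n := ⇑(B.orderEmbOfFin hAB.symm) with heB
  have hWN : (U.map (Complex.ofReal) - X).submatrix eA eB = N.submatrix eA eB := by
    funext a b
    exact hEnt _ (Finset.orderEmbOfFin_mem A rfl a) _ (Finset.orderEmbOfFin_mem B hAB.symm b)
  rw [hWN]
  by_contra hdet
  have hWcols : LinearIndependent ℂ
      (fun b : Fin A.card => fun a : Fin A.card => N (eA a) (eB b)) := by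
    rw [Fintype.linearIndependent_iff]
    intro g hg b
    set W : Matrix (Fin A.card) (Fin A.card) ℂ := N.submatrix eA eB with hW
    have hmv : W *ᵥ g = 0 := by
      funext a
      have h5 := congrFun hg a
      rw [Finset.sum_apply] at h5
      simp only [Pi.smul_apply, smul_eq_mul, Pi.zero_apply] at h5
      simp only [Matrix.mulVec, dotProduct, hW, Matrix.submatrix_apply, Pi.zero_apply]
      rw [← h5]
      apply Finset.sum_congr rfl
      intro b' _; ring
    have hWunit : IsUnit W.det := isUnit_iff_ne_zero.2 hdet
    have h6 : g = (W⁻¹ * W) *ᵥ g := by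
      rw [Matrix.nonsing_inv_mul W hWunit, Matrix.one_mulVec]
    rw [← Matrix.mulVec_mulVec, hmv, Matrix.mulVec_zero] at h6
    exact congrFun h6 b
  have hNcols : LinearIndependent ℂ
      (fun b : Fin A.card => fun i : Fin m => N i (eB b)) := by
    apply LinearIndependent.of_comp (LinearMap.funLeft ℂ ℂ eA)
    exact hWcols
  have hmemker : ∀ b : Fin A.card,
      (fun i => N i (eB b)) ∈ LinearMap.ker (Xᵀ).mulVecLin := by
    intro b
    rw [LinearMap.mem_ker]
    funext j'
    simp only [Matrix.mulVecLin_apply, Matrix.mulVec, dotProduct,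
      Matrix.transpose_apply, Pi.zero_apply]
    exact hkerN (eB b) j'
  have hsle := card_le_finrank_of_mem hmemker hNcols
  rw [Fintype.card_fin] at hsle
  have hrn := LinearMap.finrank_range_add_finrank_ker ((Xᵀ).mulVecLin)
  have hfr : Module.finrank ℂ (Fin m → ℂ) = m := by
    rw [Module.finrank_fintype_fun_eq_card, Fintype.card_fin]
  rw [hfr] at hrn
  have hrX : X.rank = Module.finrank ℂ (LinearMap.range (Xᵀ).mulVecLin) := by
    rw [← Matrix.rank_transpose X]; rfl
  have hrlt : X.rank < r := by
    set ra := Module.finrank ℂ (LinearMap.range (Xᵀ).mulVecLin) with hra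
    set ka := Module.finrank ℂ (LinearMap.ker (Xᵀ).mulVecLin) with hka
    omega
  have hN0 : ∀ i j, N i j = 0 := by
    intro i j
    rw [hN]
    show (∑ IJ ∈ F, lam IJ * fderiv ℂ (minorFun IJ.1 IJ.2) x₀ (Pi.single (i, j) 1)) = 0
    apply Finset.sum_eq_zero
    intro IJ hIJ
    rw [hF, Finset.mem_filter] at hIJ
    have hcc : IJ.1.card = IJ.2.card := by rw [hIJ.2.1, hIJ.2.2]
    rw [fderiv_minorFun_single hminors hrlt hIJ.2.1 hIJ.2.2 hcc i j, mul_zero]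
  apply hdet
  have hzero : N.submatrix eA eB = 0 := by
    funext a b; exact hN0 _ _
  rw [hzero]
  have hne : Nonempty (Fin A.card) := ⟨⟨0, by omega⟩⟩
  exact Matrix.det_zero
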